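/- Let G be a finite vertex-transitive graph, v a vertex, and 1 ≤ m₁ ≤ m₂ ≤ diam(G). Then |B(v,m₂)|/|B(v,m₁)| ≥ m₂/(8 m₁). -/
import Mathlib


/-- The graph-distance ball of radius `r` around `x`. -/
def graphBall {V : Type*} (G : SimpleGraph V) (x : V) (r : ℕ) : Set V :=
  {v | G.Reachable x v ∧ G.dist x v ≤ r}

section Aux

open SimpleGraph

variable {V : Type*} {G : SimpleGraph V}

/-- An automorphism preserves graph distance. -/
lemma aux_dist_iso (hconn : G.Connected) (φ : G ≃g G) (x y : V) :
    G.dist (φ x) (φ y) = G.dist x y := by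
  have key : ∀ (ψ : G ≃g G) (a b : V), G.dist (ψ a) (ψ b) ≤ G.dist a b := by
    intro ψ a b
    obtain ⟨p, hp⟩ := hconn.exists_walk_length_eq_dist a b
    calc G.dist (ψ a) (ψ b) ≤ (p.map ψ.toHom).length := dist_le _
      _ = p.length := by simp
      _ = G.dist a b := hp
  refine le_antisymm (key φ x y) ?_
  have h := key φ.symm (φ x) (φ y)
  simpa using h

/-- Vertices along any walk: distance grows at most by one per step. -/
lemma aux_walk_dist_le (hconn : G.Connected) {a b : V} (p : G.Walk a b)
    (s t : ℕ) (hst : s ≤ t) :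
    G.dist (p.getVert s) (p.getVert t) ≤ t - s := by
  induction t, hst using Nat.le_induction with
  | base => simp
  | succ t hst ih =>
    by_cases ht : t < p.length
    · have hadj := p.adj_getVert_succ ht
      have h1 : G.dist (p.getVert t) (p.getVert (t + 1)) ≤ 1 := by
        have := dist_le hadj.toWalk
        simpa using this
      calc G.dist (p.getVert s) (p.getVert (t + 1))
          ≤ G.dist (p.getVert s) (p.getVert t)
            + G.dist (p.getVert t) (p.getVert (t + 1)) := hconn.dist_triangle
        _ ≤ (t - s) + 1 := add_le_add ih h1
        _ = t + 1 - s := by omega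
    · have heq : p.getVert (t + 1) = p.getVert t := by
        rw [p.getVert_of_length_le (by omega), p.getVert_of_length_le (by omega)]
      rw [heq]
      exact ih.trans (by omega)

/-- On a geodesic walk, the `t`-th vertex is at distance exactly `t` from the start. -/
lemma aux_geodesic_getVert (hconn : G.Connected) {a b : V} (p : G.Walk a b)
    (hp : p.length = G.dist a b) {t : ℕ} (ht : t ≤ p.length) :
    G.dist a (p.getVert t) = t := by
  have hle : G.dist a (p.getVert t) ≤ t := by
    have := aux_walk_dist_le hconn p 0 t (Nat.zero_le t)
    simpa using this
  have hge : t ≤ G.dist a (p.getVert t) := by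
    have h1 : G.dist (p.getVert t) b ≤ p.length - t := by
      have := aux_walk_dist_le hconn p t p.length ht
      simpa using this
    have h2 : G.dist a b ≤ G.dist a (p.getVert t) + G.dist (p.getVert t) b :=
      hconn.dist_triangle
    omega
  omega

/-- On a geodesic walk, distances between vertices along the walk are additive. -/
lemma aux_geodesic_getVert_dist (hconn : G.Connected) {a b : V} (p : G.Walk a b)
    (hp : p.length = G.dist a b) {s t : ℕ} (hst : s ≤ t) (ht : t ≤ p.length) :
    G.dist (p.getVert s) (p.getVert t) = t - s := by
  have hle := aux_walk_dist_le hconn p s t hst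
  have hs := aux_geodesic_getVert hconn p hp (le_trans hst ht)
  have htt := aux_geodesic_getVert hconn p hp ht
  have h2 : G.dist a (p.getVert t) ≤ G.dist a (p.getVert s)
      + G.dist (p.getVert s) (p.getVert t) := hconn.dist_triangle
  omega

end Aux

/-- In a finite connected vertex-transitive graph, `|B(v,m₂)|/|B(v,m₁)| ≥ m₂/(8m₁)`
whenever `1 ≤ m₁ ≤ m₂ ≤ diam(G)`. -/
theorem vertexTransitive_ball_growth
    {V : Type*} [Fintype V] (G : SimpleGraph V) (hconn : G.Connected)
    (htrans : ∀ u v : V, ∃ φ : G ≃g G, φ u = v)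
    (v : V) (m₁ m₂ : ℕ) (h₁ : 1 ≤ m₁) (h₁₂ : m₁ ≤ m₂) (h₂ : m₂ ≤ G.diam) :
    (m₂ : ℝ) / (8 * m₁) ≤ ((graphBall G v m₂).ncard : ℝ) / ((graphBall G v m₁).ncard : ℝ) := by
  classical
  open SimpleGraph Finset in
  -- Finset version of balls
  set fb : V → ℕ → Finset V := fun x r => Finset.univ.filter (fun u => G.dist x u ≤ r) with hfb
  have hmem : ∀ x r u, u ∈ fb x r ↔ G.dist x u ≤ r := by
    intro x r u; simp [hfb]
  have hball : ∀ (x : V) (r : ℕ), graphBall G x r = ↑(fb x r) := by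
    intro x r
    ext u
    simp only [graphBall, Set.mem_setOf_eq, Finset.coe_filter, hfb, Finset.mem_univ, true_and,
      Set.mem_setOf_eq]
    exact ⟨fun h => h.2, fun h => ⟨hconn.preconnected x u, h⟩⟩
  have hncard : ∀ (x : V) (r : ℕ), (graphBall G x r).ncard = (fb x r).card := by
    intro x r; rw [hball, Set.ncard_coe_finset]
  -- all balls of the same radius have the same size
  have hcard : ∀ (x : V) (r : ℕ), (fb x r).card = (fb v r).card := by
    intro x r
    obtain ⟨φ, hφ⟩ := htrans v x
    have himg : (fb v r).image φ = fb x r := by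
      ext u
      simp only [Finset.mem_image, hmem]
      constructor
      · rintro ⟨z, hz, rfl⟩
        rwa [← hφ, aux_dist_iso hconn φ]
      · intro hu
        refine ⟨φ.symm u, ?_, φ.apply_symm_apply u⟩
        have h := aux_dist_iso hconn φ v (φ.symm u)
        rw [hφ, RelIso.apply_symm_apply] at h
        rwa [← h]
    rw [← himg, Finset.card_image_of_injective _ φ.injective]
  have hvmem : ∀ r, v ∈ fb v r := by
    intro r; rw [hmem, SimpleGraph.dist_self]; exact Nat.zero_le r
  have hc1pos : 0 < (fb v m₁).card := Finset.card_pos.mpr ⟨v, hvmem m₁⟩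
  -- geodesic of length diam from v
  have hnV : Nonempty V := ⟨v⟩
  obtain ⟨a, b, hab⟩ := G.exists_dist_eq_diam
  obtain ⟨ψ, hψ⟩ := htrans a v
  have hw : G.dist v (ψ b) = G.diam := by
    rw [← hψ, aux_dist_iso hconn ψ, hab]
  obtain ⟨p, hp⟩ := hconn.exists_walk_length_eq_dist v (ψ b)
  have hplen : p.length = G.diam := by rw [hp, hw]
  -- centers
  set k : ℕ := (m₂ - m₁) / (2 * m₁ + 1) with hk
  have hkle : (2 * m₁ + 1) * k ≤ m₂ - m₁ := by
    rw [hk, mul_comm]; exact Nat.div_mul_le_self _ _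
  set c : ℕ → V := fun j => p.getVert ((2 * m₁ + 1) * j) with hc
  have hposle : ∀ j ≤ k, (2 * m₁ + 1) * j ≤ m₂ - m₁ :=
    fun j hj => le_trans (Nat.mul_le_mul_left _ hj) hkle
  have hposlen : ∀ j ≤ k, (2 * m₁ + 1) * j ≤ p.length := by
    intro j hj
    have := hposle j hj
    omega
  have hdistc : ∀ j ≤ k, G.dist v (c j) = (2 * m₁ + 1) * j := by
    intro j hj
    exact aux_geodesic_getVert hconn p hp (hposlen j hj)
  have hdistcc : ∀ i j, i < j → j ≤ k →
      G.dist (c i) (c j) = (2 * m₁ + 1) * (j - i) := by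
    intro i j hij hj
    have h := aux_geodesic_getVert_dist hconn p hp
      (Nat.mul_le_mul_left (2 * m₁ + 1) hij.le) (hposlen j hj)
    rw [hc]
    rw [h, Nat.mul_sub]
  -- the disjoint union
  set T : Finset V := (Finset.range (k + 1)).biUnion (fun j => fb (c j) m₁) with hT
  have hdisj : ∀ i ∈ Finset.range (k + 1), ∀ j ∈ Finset.range (k + 1), i ≠ j →
      Disjoint (fb (c i) m₁) (fb (c j) m₁) := by
    have key : ∀ i j, i < j → j ≤ k → Disjoint (fb (c i) m₁) (fb (c j) m₁) := by
      intro i j hij hj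
      rw [Finset.disjoint_left]
      intro u hu hu'
      rw [hmem] at hu hu'
      have htri : G.dist (c i) (c j) ≤ G.dist (c i) u + G.dist u (c j) := hconn.dist_triangle
      rw [SimpleGraph.dist_comm] at hu'
      have hd := hdistcc i j hij hj
      have : 2 * m₁ + 1 ≤ (2 * m₁ + 1) * (j - i) := by
        have : 1 ≤ j - i := by omega
        calc 2 * m₁ + 1 = (2 * m₁ + 1) * 1 := by ring
          _ ≤ (2 * m₁ + 1) * (j - i) := Nat.mul_le_mul_left _ this
      omega
    intro i hi j hj hij
    simp only [Finset.mem_range] at hi hj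
    rcases lt_or_gt_of_ne hij with h | h
    · exact key i j h (by omega)
    · exact (key j i h (by omega)).symm
  have hTcard : T.card = (k + 1) * (fb v m₁).card := by
    rw [hT, Finset.card_biUnion hdisj]
    rw [Finset.sum_congr rfl (fun j _ => hcard (c j) m₁)]
    simp [mul_comm]
  have hTsub : T ⊆ fb v m₂ := by
    intro u hu
    rw [hT, Finset.mem_biUnion] at hu
    obtain ⟨j, hj, hu⟩ := hu
    rw [Finset.mem_range] at hj
    rw [hmem] at hu ⊢
    have htri : G.dist v u ≤ G.dist v (c j) + G.dist (c j) u := hconn.dist_triangle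
    have hd := hdistc j (by omega)
    have hpos := hposle j (by omega)
    omega
  have hcount : (k + 1) * (fb v m₁).card ≤ (fb v m₂).card := by
    rw [← hTcard]; exact Finset.card_le_card hTsub
  -- arithmetic : m₂ ≤ 8 * m₁ * (k + 1)
  have hklt : m₂ - m₁ < (k + 1) * (2 * m₁ + 1) := by
    have h0 : 0 < 2 * m₁ + 1 := by omega
    exact (Nat.div_lt_iff_lt_mul h0).mp (by omega)
  have harith : m₂ ≤ 8 * m₁ * (k + 1) := by
    have h5 : m₂ - m₁ < (k + 1) * (2 * m₁ + 1) := hklt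
    have h6 : m₂ ≤ m₁ + (k + 1) * (2 * m₁ + 1) := by omega
    have h7 : k * 1 ≤ k * m₁ := Nat.mul_le_mul_left k h₁
    nlinarith [h6, h7, h₁]
  -- final real arithmetic
  rw [hncard, hncard]
  have hb1 : (0 : ℝ) < ((fb v m₁).card : ℝ) := by exact_mod_cast hc1pos
  have hm1 : (0 : ℝ) < 8 * (m₁ : ℝ) := by positivity
  rw [div_le_div_iff₀ hm1 hb1]
  have hcast1 : (m₂ : ℝ) ≤ 8 * m₁ * (k + 1) := by exact_mod_cast harith
  have hcast2 : ((k : ℝ) + 1) * ((fb v m₁).card : ℝ) ≤ ((fb v m₂).card : ℝ) := by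
    exact_mod_cast hcount
  nlinarith [hb1, hcast1, hcast2, hm1]
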